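/- Let (M,φ) be a Dieudonné–Fontaine p-divisible object over a perfect field k with φ(M) ⊆ M, of rank r and h-number h. Set e = max{r, ⌊r²/4⌋}, let k₁ be the composite of k and F_{p^{r!}}, and let K ⊇ k be algebraically closed. Then every endomorphism of (M ⊗_{W(k)} W(K), φ ⊗ σ_K) is the scalar extension of an endomorphism of (M ⊗_{W(k)} W(k₁), φ ⊗ σ_{k₁}). -/

import Mathlib

noncomputable section

/-- The composite field `k₁` of `k` and `𝔽_{p^{r!}}` inside an algebraically closed
extension `K` of `k`. -/
noncomputable def compositeField (p : ℕ) (k K : Type) [Field k] [Field K] [Algebra k K]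
    (r : ℕ) : Subfield K :=
  Subfield.closure (Set.range (algebraMap k K) ∪ {x : K | x ^ (p ^ (r.factorial)) = x})

/-- The base change to `W(K)` of a Dieudonné–Fontaine `p`-divisible object `(M,φ)` over `k`
given by `φ(e_i) = p^{m i} e_{π i}` (all `m i ≥ 0`, i.e. `φ(M) ⊆ M`). -/
noncomputable def phiDF (p : ℕ) [Fact p.Prime] (K : Type) [CommRing K] (r : ℕ)
    (π : Equiv.Perm (Fin r)) (m : Fin r → ℕ) :
    (Fin r → WittVector p K) → (Fin r → WittVector p K) :=
  fun v j => ((p : WittVector p K) ^ (m (π.symm j))) * WittVector.frobenius (v (π.symm j))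

/-- If `p^Sj * x = p^Si * F^[N] x` in `W(K)` for a perfect field `K` of char `p`,
then `F^[N] x = x`. -/
theorem frobenius_iterate_fixed_of_rel (p : ℕ) [Fact p.Prime] (K : Type) [Field K]
    [CharP K p] [PerfectRing K p] (N Si Sj : ℕ) (x : WittVector p K)
    (key : (p : WittVector p K) ^ Sj * x
      = (p : WittVector p K) ^ Si * (WittVector.frobenius^[N] x)) :
    WittVector.frobenius^[N] x = x := by
  have hpirr : Irreducible (p : WittVector p K) := WittVector.irreducible p
  have hpne : (p : WittVector p K) ≠ 0 := hpirr.ne_zero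
  by_cases h0 : x = 0
  · rw [h0]
    exact Function.iterate_fixed (map_zero WittVector.frobenius) N
  · obtain ⟨v, u, hu⟩ := WittVector.exists_eq_pow_p_mul' x h0
    have hcu : IsUnit (WittVector.frobenius^[N] (u : WittVector p K)) := by
      have : (WittVector.frobenius^[N] (u : WittVector p K)) *
          (WittVector.frobenius^[N] ((u⁻¹ : Units (WittVector p K)) : WittVector p K)) = 1 := by
        rw [← iterate_map_mul WittVector.frobenius N, Units.mul_inv, iterate_map_one]
      exact isUnit_iff_exists_inv.mpr ⟨_, this⟩
    have hpv : WittVector.frobenius^[N] ((p : WittVector p K) ^ v) = (p : WittVector p K) ^ v :=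
      Function.iterate_fixed (by rw [map_pow, map_natCast]) N
    have hFa : WittVector.frobenius^[N] x
        = (p : WittVector p K) ^ v * (WittVector.frobenius^[N] (u : WittVector p K)) := by
      rw [hu, iterate_map_mul WittVector.frobenius, hpv]
    have key2 : (p : WittVector p K) ^ (Sj + v) * (u : WittVector p K)
        = (p : WittVector p K) ^ (Si + v) * (WittVector.frobenius^[N] (u : WittVector p K)) := by
      rw [hFa, hu] at key
      rw [pow_add, pow_add]
      calc (p : WittVector p K) ^ Sj * (p : WittVector p K) ^ v * (u : WittVector p K)
          = (p : WittVector p K) ^ Sj * ((p : WittVector p K) ^ v * (u : WittVector p K)) := by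
            ring
        _ = (p : WittVector p K) ^ Si * ((p : WittVector p K) ^ v *
              (WittVector.frobenius^[N] (u : WittVector p K))) := key
        _ = (p : WittVector p K) ^ Si * (p : WittVector p K) ^ v *
              (WittVector.frobenius^[N] (u : WittVector p K)) := by ring
    have hSij : Si = Sj := by
      rcases lt_trichotomy Si Sj with hlt | heq | hgt
      · exfalso
        have hd : Sj + v = (Si + v) + (Sj - Si) := by omega
        rw [hd, pow_add (p : WittVector p K) (Si + v) (Sj - Si), mul_assoc] at key2
        have hcan := mul_left_cancel₀ (pow_ne_zero (Si + v) hpne) key2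
        have hdvd : (p : WittVector p K) ∣ (WittVector.frobenius^[N] (u : WittVector p K)) := by
          rw [← hcan]
          have hd1 : Sj - Si = (Sj - Si - 1) + 1 := by omega
          rw [hd1, pow_succ]
          exact ⟨(p : WittVector p K) ^ (Sj - Si - 1) * (u : WittVector p K), by ring⟩
        exact hpirr.not_isUnit (isUnit_of_dvd_unit hdvd hcu)
      · exact heq
      · exfalso
        have hd : Si + v = (Sj + v) + (Si - Sj) := by omega
        rw [hd, pow_add (p : WittVector p K) (Sj + v) (Si - Sj), mul_assoc] at key2
        have hcan := mul_left_cancel₀ (pow_ne_zero (Sj + v) hpne) key2.symm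
        have hdvd : (p : WittVector p K) ∣ ((u : WittVector p K)) := by
          rw [← hcan]
          have hd1 : Si - Sj = (Si - Sj - 1) + 1 := by omega
          rw [hd1, pow_succ]
          exact ⟨(p : WittVector p K) ^ (Si - Sj - 1) *
            (WittVector.frobenius^[N] (u : WittVector p K)), by ring⟩
        exact hpirr.not_isUnit (isUnit_of_dvd_unit hdvd u.isUnit)
    rw [hSij] at key
    exact (mul_left_cancel₀ (pow_ne_zero Sj hpne) key).symm

/-- A Witt vector all of whose coefficients lie in a subfield is in the range of the
map induced by the inclusion. -/
theorem mem_range_wittVector_map (p : ℕ) [Fact p.Prime] (K : Type) [Field K]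
    (S : Subfield K) (x : WittVector p K) (hx : ∀ n : ℕ, x.coeff n ∈ S) :
    x ∈ Set.range (WittVector.map S.subtype) := by
  refine ⟨WittVector.mk p (fun n => (⟨x.coeff n, hx n⟩ : S)), ?_⟩
  ext n
  rw [WittVector.map_coeff]
  rfl

/-- Let `(M,φ)` be a Dieudonné–Fontaine `p`-divisible object over a perfect
field `k` with `φ(M) ⊆ M`, of rank `r` and `h`-number `h`, let `k₁` be the composite of `k`
and `𝔽_{p^{r!}}`, and let `K ⊇ k` be algebraically closed.  Then every endomorphism of
`(M ⊗_{W(k)} W(K), φ ⊗ σ_K)` is the scalar extension of an endomorphism over `W(k₁)`: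
all its matrix entries lie in the image of `W(k₁) → W(K)`. -/
theorem stmt14 (p : ℕ) [Fact p.Prime] (k K : Type) [Field k] [CharP k p] [PerfectRing k p]
    [Field K] [CharP K p] [IsAlgClosed K] [Algebra k K]
    (r : ℕ) (hr : 0 < r) (π : Equiv.Perm (Fin r)) (m : Fin r → ℕ) (h : ℕ)
    (hm : ∀ i, m i ≤ h)
    (f : (Fin r → WittVector p K) →ₗ[WittVector p K] (Fin r → WittVector p K))
    (hf : ∀ v, f (phiDF p K r π m v) = phiDF p K r π m (f v)) :
    ∀ i j : Fin r, f (Pi.single j (1 : WittVector p K)) i ∈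
      Set.range (WittVector.map (compositeField p k K r).subtype) := by
  classical
  have hφ : ∀ j : Fin r, phiDF p K r π m (Pi.single j (1 : WittVector p K))
      = ((p : WittVector p K) ^ (m j)) •
        (Pi.single (π j) (1 : WittVector p K) : Fin r → WittVector p K) := by
    intro j
    funext i'
    simp only [phiDF, Pi.smul_apply, smul_eq_mul]
    by_cases hij : i' = π j
    · subst hij
      rw [Equiv.symm_apply_apply, Pi.single_eq_same, Pi.single_eq_same, map_one, mul_one]
    · have h2 : π.symm i' ≠ j := fun hc => hij (by rw [← hc, Equiv.apply_symm_apply])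
      rw [Pi.single_eq_of_ne h2, Pi.single_eq_of_ne hij, map_zero, mul_zero, mul_zero]
  -- the basic matrix relation
  have R : ∀ i j : Fin r,
      (p : WittVector p K) ^ (m j) * f (Pi.single (π j) 1) (π i)
      = (p : WittVector p K) ^ (m i) * WittVector.frobenius (f (Pi.single j 1) i) := by
    intro i j
    have := congrFun (hf (Pi.single j (1 : WittVector p K))) (π i)
    rw [hφ j, map_smul] at this
    simpa [phiDF, smul_eq_mul] using this
  -- iterated relation
  have Rn : ∀ (n : ℕ) (i j : Fin r),
      (p : WittVector p K) ^ (∑ t ∈ Finset.range n, m ((π ^ t) j)) *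
        f (Pi.single ((π ^ n) j) 1) ((π ^ n) i)
      = (p : WittVector p K) ^ (∑ t ∈ Finset.range n, m ((π ^ t) i)) *
        (WittVector.frobenius^[n] (f (Pi.single j 1) i)) := by
    intro n
    induction n with
    | zero => simp
    | succ n ih =>
      intro i j
      have hpow : ∀ x : Fin r, (π ^ (n + 1)) x = π ((π ^ n) x) := by
        intro x; rw [pow_succ']; rfl
      rw [Finset.sum_range_succ, Finset.sum_range_succ, hpow i, hpow j, pow_add, pow_add]
      calc (p : WittVector p K) ^ (∑ t ∈ Finset.range n, m ((π ^ t) j)) *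
            (p : WittVector p K) ^ (m ((π ^ n) j)) *
            f (Pi.single (π ((π ^ n) j)) 1) (π ((π ^ n) i))
          = (p : WittVector p K) ^ (∑ t ∈ Finset.range n, m ((π ^ t) j)) *
            ((p : WittVector p K) ^ (m ((π ^ n) i)) *
              WittVector.frobenius (f (Pi.single ((π ^ n) j) 1) ((π ^ n) i))) := by
            rw [mul_assoc, R ((π ^ n) i) ((π ^ n) j)]
        _ = (p : WittVector p K) ^ (m ((π ^ n) i)) *
            WittVector.frobenius ((p : WittVector p K) ^ (∑ t ∈ Finset.range n, m ((π ^ t) j)) *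
              f (Pi.single ((π ^ n) j) 1) ((π ^ n) i)) := by
            rw [map_mul, map_pow, map_natCast]; ring
        _ = (p : WittVector p K) ^ (m ((π ^ n) i)) *
            WittVector.frobenius ((p : WittVector p K) ^ (∑ t ∈ Finset.range n, m ((π ^ t) i)) *
              (WittVector.frobenius^[n] (f (Pi.single j 1) i))) := by
            rw [ih i j]
        _ = (p : WittVector p K) ^ (∑ t ∈ Finset.range n, m ((π ^ t) i)) *
            (p : WittVector p K) ^ (m ((π ^ n) i)) *
            (WittVector.frobenius^[n + 1] (f (Pi.single j 1) i)) := by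
            rw [map_mul, map_pow, map_natCast, Function.iterate_succ_apply']; ring
  have hπN : π ^ r.factorial = 1 := by
    have h2 : orderOf π ∣ Fintype.card (Equiv.Perm (Fin r)) := orderOf_dvd_card
    have h3 : orderOf π ∣ r.factorial := by
      rwa [Fintype.card_perm, Fintype.card_fin] at h2
    exact orderOf_dvd_iff_pow_eq_one.mp h3
  intro i j
  have key : (p : WittVector p K) ^ (∑ t ∈ Finset.range r.factorial, m ((π ^ t) j)) *
        f (Pi.single j 1) i
      = (p : WittVector p K) ^ (∑ t ∈ Finset.range r.factorial, m ((π ^ t) i)) *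
        (WittVector.frobenius^[r.factorial] (f (Pi.single j 1) i)) := by
    have := Rn r.factorial i j
    rwa [hπN] at this
  have hfix := frobenius_iterate_fixed_of_rel p K r.factorial _ _ _ key
  apply mem_range_wittVector_map
  intro n
  refine Subfield.subset_closure (Or.inr ?_)
  show (f (Pi.single j 1) i).coeff n ^ p ^ r.factorial = (f (Pi.single j 1) i).coeff n
  conv_rhs => rw [← hfix]
  rw [WittVector.iterate_frobenius_coeff]
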